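/- Let X_1,…,X_n be a regular collage system (straight-line program) over a finite alphabet Σ deriving the string T = val(X_n). Define vOcc : {1,…,n} → ℕ by vOcc(n) = 1 and, for i < n, vOcc(i) = Σ_{j : X_j = X_i X_r} vOcc(j) + Σ_{j : X_j = X_ℓ X_i} vOcc(j), where an assignment X_j = X_i X_i contributes 2·vOcc(j). Then for every integer q ≥ 2 and every string P over Σ with |P| = q: |Occ(T,P)| = Σ_{i : X_i = X_ℓ X_r} vOcc(i) · |Occ(suf(val(X_ℓ),q−1)·pre(val(X_r),q−1), P)|. -/

import Mathlib

/-- `Occ T P` is the set of (1-based) occurrence positions of `P` in `T`: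
`{ i : 1 ≤ i ≤ |T|−|P|+1 and T[i:i+|P|−1] = P }`. -/
def Occ {α : Type*} [DecidableEq α] (T P : List α) : Finset ℕ :=
  (Finset.Icc 1 (T.length - P.length + 1)).filter
    (fun i => (T.drop (i - 1)).take P.length = P)

/-- `pre T k = T[1:min(k,|T|)]`, the prefix of `T` of length at most `k`. -/
def pre {α : Type*} (T : List α) (k : ℕ) : List α := T.take k

/-- `suf T k = T[|T|−min(k,|T|)+1:|T|]`, the suffix of `T` of length at most `k`. -/
def suf {α : Type*} (T : List α) (k : ℕ) : List α := T.drop (T.length - k)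

/-- `listPow w p` is the `p`-fold concatenation `w^p`. -/
def listPow {α : Type*} (w : List α) : ℕ → List α
  | 0 => []
  | p + 1 => w ++ listPow w p

/-- An assignment of a regular collage system (straight-line program) with variables
indexed by `Fin n`: a terminal symbol or a concatenation of two variables. -/
inductive SLPExpr (α : Type*) (n : ℕ) where
  | term : α → SLPExpr α n
  | concat : Fin n → Fin n → SLPExpr α n

/-- How many times the assignment `e` references variable `i`
(`X_j = X_i X_i` counts twice). -/
def SLPExpr.refCount {α : Type*} {n : ℕ} (e : SLPExpr α n) (i : Fin n) : ℕ :=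
  match e with
  | .term _ => 0
  | .concat l r => (if l = i then 1 else 0) + (if r = i then 1 else 0)


section Aux
set_option linter.unusedSectionVars false
variable {α : Type*} [DecidableEq α]

def Occ0 (T P : List α) : Finset ℕ :=
  (Finset.range T.length).filter (fun i => (T.drop i).take P.length = P)

lemma mem_Occ0 {T P : List α} {i : ℕ} :
    i ∈ Occ0 T P ↔ i < T.length ∧ (T.drop i).take P.length = P := by
  simp [Occ0]

lemma matchAt_bound {T P : List α} {i : ℕ} (hP : 0 < P.length)
    (h : (T.drop i).take P.length = P) : i + P.length ≤ T.length := by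
  have := congrArg List.length h
  simp [List.length_take, List.length_drop] at this
  omega

lemma cross_match (u v P : List α) (i : ℕ)
    (hq : 1 ≤ P.length)
    (h1 : i < u.length) (h2 : u.length < i + P.length) :
    (((u.drop (u.length - (P.length - 1)) ++ v.take (P.length - 1)).drop
        (i - (u.length - (P.length - 1)))).take P.length)
      = (((u ++ v).drop i).take P.length) := by
  set q := P.length with hqdef
  set s := u.length - (q - 1) with hs
  have hsi : s ≤ i := by omega
  rw [List.drop_append_of_le_length (by simp; omega),
      List.drop_drop, List.drop_append_of_le_length (le_of_lt h1)]
  have : s + (i - s) = i := by omega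
  rw [this]
  rw [List.take_append, List.take_append,
      List.take_take]
  have hlen : (u.drop i).length = u.length - i := by simp
  congr 1
  have : min (q - (u.drop i).length) (q - 1) = q - (u.drop i).length := by
    simp [hlen]; omega
  rw [this]

lemma Occ0_append (u v P : List α) (hP : 2 ≤ P.length) :
    (Occ0 (u ++ v) P).card =
      (Occ0 u P).card + (Occ0 v P).card +
      (Occ0 (u.drop (u.length - (P.length - 1)) ++ v.take (P.length - 1)) P).card := by
  classical
  set S := Occ0 (u ++ v) P with hS
  have hwlen : (u.drop (u.length - (P.length - 1)) ++ v.take (P.length - 1)).length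
      = (u.length - (u.length - (P.length - 1))) + min (P.length - 1) v.length := by
    simp
  have h1 : S.card = (S.filter (fun i => i + P.length ≤ u.length)).card
      + (S.filter (fun i => ¬ (i + P.length ≤ u.length))).card :=
    (Finset.card_filter_add_card_filter_not _).symm
  have h2 : (S.filter (fun i => ¬ (i + P.length ≤ u.length))).card
      = ((S.filter (fun i => ¬ (i + P.length ≤ u.length))).filter (fun i => u.length ≤ i)).card
      + ((S.filter (fun i => ¬ (i + P.length ≤ u.length))).filter (fun i => ¬ u.length ≤ i)).card :=
    (Finset.card_filter_add_card_filter_not _).symm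
  -- Part A : fully inside u
  have hA : S.filter (fun i => i + P.length ≤ u.length) = Occ0 u P := by
    ext i
    simp only [Finset.mem_filter, hS, mem_Occ0, List.length_append]
    constructor
    · rintro ⟨⟨hi, hm⟩, hb⟩
      refine ⟨by omega, ?_⟩
      rwa [List.drop_append_of_le_length (by omega),
        List.take_append_of_le_length (by simp; omega)] at hm
    · rintro ⟨hi, hm⟩
      have hb := matchAt_bound (by omega) hm
      refine ⟨⟨by omega, ?_⟩, by omega⟩
      rwa [List.drop_append_of_le_length (by omega),
        List.take_append_of_le_length (by simp; omega)]
  -- Part B : fully inside v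
  have hB : ((S.filter (fun i => ¬ (i + P.length ≤ u.length))).filter (fun i => u.length ≤ i)).card
      = (Occ0 v P).card := by
    apply Finset.card_bij (fun i _ => i - u.length)
    · intro a ha
      simp only [Finset.mem_filter, hS, mem_Occ0, List.length_append] at ha
      obtain ⟨⟨⟨hi, hm⟩, -⟩, hge⟩ := ha
      have : a = u.length + (a - u.length) := by omega
      rw [this, List.drop_length_add_append] at hm
      exact mem_Occ0.2 ⟨by omega, hm⟩
    · intro a ha b hb hab
      simp only [Finset.mem_filter] at ha hb
      omega
    · intro b hb
      rw [mem_Occ0] at hb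
      refine ⟨b + u.length, ?_, by omega⟩
      simp only [Finset.mem_filter, hS, mem_Occ0, List.length_append]
      have hm : ((u ++ v).drop (b + u.length)).take P.length = P := by
        have : b + u.length = u.length + b := by omega
        rw [this, List.drop_length_add_append]; exact hb.2
      exact ⟨⟨⟨by omega, hm⟩, by omega⟩, by omega⟩
  -- Part C : crossing
  have hC : ((S.filter (fun i => ¬ (i + P.length ≤ u.length))).filter (fun i => ¬ u.length ≤ i)).card
      = (Occ0 (u.drop (u.length - (P.length - 1)) ++ v.take (P.length - 1)) P).card := by
    apply Finset.card_bij (fun i _ => i - (u.length - (P.length - 1)))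
    · intro a ha
      simp only [Finset.mem_filter, hS, mem_Occ0, List.length_append] at ha
      obtain ⟨⟨⟨hi, hm⟩, hcr⟩, hlt⟩ := ha
      rw [mem_Occ0]
      refine ⟨by rw [hwlen]; omega, ?_⟩
      rw [cross_match u v P a (by omega) (by omega) (by omega)]
      exact hm
    · intro a ha b hb hab
      simp only [Finset.mem_filter, hS, mem_Occ0, List.length_append] at ha hb
      omega
    · intro b hb
      rw [mem_Occ0] at hb
      obtain ⟨hblt, hbm⟩ := hb
      have hbb := matchAt_bound (α := α) (by omega) hbm
      rw [hwlen] at hbb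
      have h1' : b + (u.length - (P.length - 1)) < u.length := by omega
      have h2' : u.length < b + (u.length - (P.length - 1)) + P.length := by omega
      refine ⟨b + (u.length - (P.length - 1)), ?_, by omega⟩
      simp only [Finset.mem_filter, hS, mem_Occ0, List.length_append]
      have hm : ((u ++ v).drop (b + (u.length - (P.length - 1)))).take P.length = P := by
        rw [← cross_match u v P (b + (u.length - (P.length - 1))) (by omega) h1' h2']
        have heq : b + (u.length - (P.length - 1)) - (u.length - (P.length - 1)) = b := by omega
        rw [heq]; exact hbm
      exact ⟨⟨⟨by omega, hm⟩, by omega⟩, by omega⟩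
  rw [h1, h2, hA, hB, hC]; ring


lemma card_Occ (T P : List α) (hP : 0 < P.length) :
    (Occ T P).card = (Occ0 T P).card := by
  apply Finset.card_bij (fun i _ => i - 1)
  · intro a ha
    simp only [Occ, Finset.mem_filter, Finset.mem_Icc] at ha
    obtain ⟨⟨h1, h2⟩, hm⟩ := ha
    have := matchAt_bound hP hm
    exact mem_Occ0.2 ⟨by omega, hm⟩
  · intro a ha b hb hab
    simp only [Occ, Finset.mem_filter, Finset.mem_Icc] at ha hb
    omega
  · intro b hb
    rw [mem_Occ0] at hb
    obtain ⟨hb1, hb2⟩ := hb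
    refine ⟨b + 1, ?_, by omega⟩
    have hm : (T.drop (b + 1 - 1)).take P.length = P := by simpa using hb2
    have := matchAt_bound hP hm
    simp only [Occ, Finset.mem_filter, Finset.mem_Icc]
    exact ⟨⟨by omega, by omega⟩, hm⟩

lemma Occ0_term (a : α) (P : List α) (hP : 2 ≤ P.length) :
    (Occ0 [a] P).card = 0 := by
  rw [Finset.card_eq_zero]
  ext i
  simp only [Occ0, Finset.mem_filter, Finset.mem_range, Finset.notMem_empty, iff_false]
  rintro ⟨hi, hm⟩
  have := matchAt_bound (T := [a]) (by omega) hm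
  simp at this; omega

end Aux

lemma slp_algebra {γ : Type*} {n : ℕ} (hn : 0 < n)
    (expr : Fin n → SLPExpr γ n) (vOcc g f : Fin n → ℕ)
    (hwf : ∀ i : Fin n, match expr i with
      | .term _ => True
      | .concat l r => l < i ∧ r < i)
    (hlast : vOcc ⟨n - 1, Nat.sub_lt hn Nat.one_pos⟩ = 1)
    (hvOcc : ∀ i : Fin n, (i : ℕ) + 1 < n →
      vOcc i = ∑ j : Fin n, vOcc j * (expr j).refCount i)
    (hstep : ∀ i : Fin n, g i = f i + ∑ k : Fin n, (expr i).refCount k * g k) :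
    g ⟨n - 1, Nat.sub_lt hn Nat.one_pos⟩ = ∑ i : Fin n, vOcc i * f i := by
  classical
  set top : Fin n := ⟨n - 1, Nat.sub_lt hn Nat.one_pos⟩ with htop
  have hlast' : vOcc top = 1 := hlast
  have refTop : ∀ i : Fin n, (expr i).refCount top = 0 := by
    intro i
    have hw := hwf i
    have hi := i.isLt
    rcases h : expr i with a | ⟨l, r⟩
    · rfl
    · rw [h] at hw
      obtain ⟨hl, hr⟩ := hw
      rw [Fin.lt_def] at hl hr
      have h1 : l ≠ top := by
        intro he; rw [he] at hl; simp only [htop] at hl; omega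
      have h2 : r ≠ top := by
        intro he; rw [he] at hr; simp only [htop] at hr; omega
      simp [SLPExpr.refCount, h1, h2]
  have expand : ∑ i : Fin n, vOcc i * g i
      = (∑ i : Fin n, vOcc i * f i)
        + ∑ k : Fin n, (∑ i : Fin n, vOcc i * (expr i).refCount k) * g k := by
    calc ∑ i : Fin n, vOcc i * g i
        = ∑ i : Fin n, (vOcc i * f i + ∑ k : Fin n, vOcc i * (expr i).refCount k * g k) := by
          refine Finset.sum_congr rfl fun i _ => ?_
          rw [hstep i, mul_add, Finset.mul_sum]
          congr 1
          exact Finset.sum_congr rfl fun k _ => by ring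
      _ = (∑ i : Fin n, vOcc i * f i)
          + ∑ i : Fin n, ∑ k : Fin n, vOcc i * (expr i).refCount k * g k := by
          rw [Finset.sum_add_distrib]
      _ = (∑ i : Fin n, vOcc i * f i)
          + ∑ k : Fin n, (∑ i : Fin n, vOcc i * (expr i).refCount k) * g k := by
          congr 1
          rw [Finset.sum_comm]
          exact Finset.sum_congr rfl fun k _ => (Finset.sum_mul _ _ _).symm
  have inner : ∀ k : Fin n, k ≠ top →
      (∑ i : Fin n, vOcc i * (expr i).refCount k) = vOcc k := by
    intro k hk
    have hkn := k.isLt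
    have h2 : (k : ℕ) ≠ n - 1 := by
      intro h
      exact hk (Fin.ext (by simp only [htop, h]))
    exact (hvOcc k (by omega)).symm
  have split1 : ∑ i : Fin n, vOcc i * g i
      = vOcc top * g top + ∑ i ∈ Finset.univ.erase top, vOcc i * g i :=
    (Finset.add_sum_erase _ _ (Finset.mem_univ top)).symm
  have split2 : ∑ k : Fin n, (∑ i : Fin n, vOcc i * (expr i).refCount k) * g k
      = ∑ k ∈ Finset.univ.erase top, vOcc k * g k := by
    rw [← Finset.add_sum_erase _ _ (Finset.mem_univ top)]
    have hz : (∑ i : Fin n, vOcc i * (expr i).refCount top) * g top = 0 := by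
      simp [refTop]
    rw [hz, zero_add]
    exact Finset.sum_congr rfl fun k hk => by
      rw [inner k (Finset.ne_of_mem_erase hk)]
  rw [split1, split2] at expand
  have hcancel : vOcc top * g top = ∑ i : Fin n, vOcc i * f i := by
    omega
  rw [hlast', one_mul] at hcancel
  exact hcancel

/-- `q`-gram frequencies on a regular collage system (SLP).
`expr` gives the assignments (each referring only to earlier variables), `val` their
derived strings, `T = val(X_n)`, and `vOcc` counts occurrences of each variable in the
derivation tree: `vOcc(n) = 1` and for `i < n`,
`vOcc(i) = Σ_{j : X_j = X_i X_r} vOcc(j) + Σ_{j : X_j = X_ℓ X_i} vOcc(j)`.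
Then `|Occ(T,P)| = Σ_{i : X_i = X_ℓ X_r} vOcc(i)·|Occ(suf(val(X_ℓ),q−1)·pre(val(X_r),q−1),P)|`. -/
theorem qgram_frequencies_on_SLP {α : Type*} [Fintype α] [DecidableEq α]
    (n : ℕ) (hn : 0 < n)
    (expr : Fin n → SLPExpr α n) (val : Fin n → List α) (vOcc : Fin n → ℕ)
    (hwf : ∀ i : Fin n, match expr i with
      | .term _ => True
      | .concat l r => l < i ∧ r < i)
    (hval : ∀ i : Fin n, val i = match expr i with
      | .term a => [a]
      | .concat l r => val l ++ val r)
    (hlast : vOcc ⟨n - 1, by omega⟩ = 1)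
    (hvOcc : ∀ i : Fin n, (i : ℕ) + 1 < n →
      vOcc i = ∑ j : Fin n, vOcc j * (expr j).refCount i)
    (q : ℕ) (hq : 2 ≤ q) (P : List α) (hP : P.length = q) :
    (Occ (val ⟨n - 1, by omega⟩) P).card =
      ∑ i : Fin n, vOcc i *
        (match expr i with
         | .term _ => 0
         | .concat l r =>
            (Occ (suf (val l) (q - 1) ++ pre (val r) (q - 1)) P).card) := by
  classical
  have hPlen : 2 ≤ P.length := by omega
  have key := slp_algebra (γ := α) hn expr vOcc
    (fun i => (Occ0 (val i) P).card)
    (fun i => match expr i with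
      | .term _ => 0
      | .concat l r => (Occ0 (suf (val l) (q - 1) ++ pre (val r) (q - 1)) P).card)
    hwf hlast hvOcc ?hstep
  · beta_reduce at key
    rw [card_Occ _ _ (by omega), key]
    refine Finset.sum_congr rfl fun i _ => ?_
    rcases hexp : expr i with a | ⟨l, r⟩ <;> simp only [hexp]
    rw [card_Occ _ _ (by omega)]
  case hstep =>
    intro i
    rcases hexp : expr i with a | ⟨l, r⟩
    · have hv : val i = [a] := by rw [hval i, hexp]
      simp only [hexp, hv, SLPExpr.refCount]
      simp [Occ0_term a P hPlen]
    · have hv : val i = val l ++ val r := by rw [hval i, hexp]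
      have hsum : ∑ k : Fin n, (SLPExpr.concat (α := α) l r).refCount k
          * (Occ0 (val k) P).card
          = (Occ0 (val l) P).card + (Occ0 (val r) P).card := by
        simp only [SLPExpr.refCount, add_mul, ite_mul, one_mul, zero_mul,
          Finset.sum_add_distrib, Finset.sum_ite_eq, Finset.mem_univ, if_true]
      simp only [hexp, hv, hsum]
      rw [Occ0_append (val l) (val r) P hPlen]
      have hsuf : suf (val l) (q - 1) = (val l).drop ((val l).length - (P.length - 1)) := by
        rw [suf, hP]
      have hpre : pre (val r) (q - 1) = (val r).take (P.length - 1) := by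
        rw [pre, hP]
      rw [hsuf, hpre]
      ring
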